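/- Let C be a coassociative counital coalgebra over a field k whose maximal cosemisimple subcoalgebra C^ss is finite-dimensional. Then any co-Noetherian left C-comodule is Artinian. -/

import Mathlib

open TensorProduct LinearMap

section Core

variable (k : Type) [Field k]
variable (C : Type) [AddCommGroup C] [Module k C] [Coalgebra k C]

/-- Axioms for a left `C`-comodule structure given by a coaction map `ρ`. -/
structure IsComod {M : Type} [AddCommGroup M] [Module k M]
    (ρ : M →ₗ[k] C ⊗[k] M) : Prop where
  coassoc : ∀ m : M, (TensorProduct.assoc k C C M)
      ((CoalgebraStruct.comul (R := k) (A := C)).rTensor M (ρ m)) = ρ.lTensor C (ρ m)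
  counit : ∀ m : M, (TensorProduct.lid k M)
      ((CoalgebraStruct.counit (R := k) (A := C)).rTensor M (ρ m)) = m

/-- A `k`-linear map between comodules is a comodule morphism. -/
def IsComodHom {M N : Type} [AddCommGroup M] [Module k M] [AddCommGroup N] [Module k N]
    (ρM : M →ₗ[k] C ⊗[k] M) (ρN : N →ₗ[k] C ⊗[k] N) (f : M →ₗ[k] N) : Prop :=
  f.lTensor C ∘ₗ ρM = ρN ∘ₗ f

/-- The coaction of the cofree left comodule `C ⊗ V`. -/
noncomputable def cofreeCoaction (V : Type) [AddCommGroup V] [Module k V] :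
    C ⊗[k] V →ₗ[k] C ⊗[k] (C ⊗[k] V) :=
  (TensorProduct.assoc k C C V).toLinearMap ∘ₗ
    (CoalgebraStruct.comul (R := k) (A := C)).rTensor V

/-- A left comodule is finitely cogenerated if it admits an injective comodule
morphism into a cofree comodule with finite-dimensional space of cogenerators. -/
def FinCogen {M : Type} [AddCommGroup M] [Module k M]
    (ρ : M →ₗ[k] C ⊗[k] M) : Prop :=
  ∃ (V : Type) (_ : AddCommGroup V) (_ : Module k V), FiniteDimensional k V ∧
    ∃ f : M →ₗ[k] C ⊗[k] V, Function.Injective f ∧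
      IsComodHom k C ρ (cofreeCoaction k C V) f

end Core

open TensorProduct LinearMap

section Conil

variable (k : Type) [Field k]
variable (C : Type) [AddCommGroup C] [Module k C] [Coalgebra k C]

/-- The image of `A ⊗ B` in `C ⊗ C`, for submodules `A B ⊆ C`. -/
noncomputable def tensorSub (A B : Submodule k C) : Submodule k (C ⊗[k] C) :=
  LinearMap.range (TensorProduct.map A.subtype B.subtype)

/-- `conilChain k C E n` is the kernel of the `n`-fold iterated comultiplication map
`C → (C/E)^{⊗ (n+1)}`. -/
noncomputable def conilChain (E : Submodule k C) : ℕ → Submodule k C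
  | 0 => E
  | n + 1 => Submodule.comap (CoalgebraStruct.comul (R := k) (A := C))
      (tensorSub k C E ⊤ ⊔ tensorSub k C ⊤ (conilChain E n))

/-- The quotient of `C` by the subcoalgebra `E` is a conilpotent coalgebra without
counit: every element is annihilated by some iterated comultiplication map
`C → (C/E)^{⊗ (n+1)}`. -/
def ConilpotentQuotient (E : Submodule k C) : Prop :=
  ∀ c : C, ∃ n : ℕ, c ∈ conilChain k C E n

variable {E : Type} [AddCommGroup E] [Module k E] [Coalgebra k E]

/-- Given a subcoalgebra `ι : E → C` and a comodule coaction `ρ` on `M`, this is the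
maximal subcomodule `_E M` of `M` whose comodule structure comes from an `E`-comodule
structure; it is the full preimage of `E ⊗ M` under the coaction map. -/
noncomputable def maxSubcomodule {M : Type} [AddCommGroup M] [Module k M]
    (ι : E →ₗc[k] C) (ρ : M →ₗ[k] C ⊗[k] M) : Submodule k M :=
  Submodule.comap ρ (LinearMap.range (ι.toLinearMap.rTensor M))

end Conil

section SubQuot

variable (k : Type) [Field k]
variable (C : Type) [AddCommGroup C] [Module k C] [Coalgebra k C]
variable {M : Type} [AddCommGroup M] [Module k M]

/-- A subspace `N ⊆ M` is a subcomodule if the coaction takes it into the image of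
`C ⊗ N` in `C ⊗ M`. -/
def IsSubcomod (ρ : M →ₗ[k] C ⊗[k] M) (N : Submodule k M) : Prop :=
  ∀ m ∈ N, ρ m ∈ LinearMap.range (N.subtype.lTensor C)

/-- The quotient comodule `M/N` is finitely cogenerated; equivalently, there is a
morphism of comodules from `M` to a cofree comodule with a finite-dimensional space
of cogenerators whose kernel is exactly `N`. -/
def QuotFinCogen (ρ : M →ₗ[k] C ⊗[k] M) (N : Submodule k M) : Prop :=
  ∃ (V : Type) (_ : AddCommGroup V) (_ : Module k V), FiniteDimensional k V ∧
    ∃ g : M →ₗ[k] C ⊗[k] V, IsComodHom k C ρ (cofreeCoaction k C V) g ∧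
      LinearMap.ker g = N

/-- A comodule is co-Noetherian if all its quotient comodules are finitely
cogenerated. -/
def CoNoetherianComod (ρ : M →ₗ[k] C ⊗[k] M) : Prop :=
  ∀ N : Submodule k M, IsSubcomod k C ρ N → QuotFinCogen k C ρ N

/-- A comodule is Artinian if every descending chain of its subcomodules
terminates. -/
def ArtinianComod (ρ : M →ₗ[k] C ⊗[k] M) : Prop :=
  ∀ f : ℕ → Submodule k M, (∀ n, IsSubcomod k C ρ (f n)) →
    (∀ n, f (n + 1) ≤ f n) → ∃ n, ∀ m, n ≤ m → f m = f n

end SubQuot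

section MaxCosemisimple

variable (k : Type) [Field k]
variable (C : Type) [AddCommGroup C] [Module k C] [Coalgebra k C]

/-- A subspace `E ⊆ C` is a subcoalgebra if the comultiplication takes it into
the image of `E ⊗ E` in `C ⊗ C`. -/
def IsSubcoalgebra (E : Submodule k C) : Prop :=
  ∀ x ∈ E, CoalgebraStruct.comul (R := k) (A := C) x ∈ tensorSub k C E E

/-- `E` is the maximal cosemisimple subcoalgebra `C^ss` of `C`: it is the minimal
subcoalgebra of `C` such that the quotient coalgebra without counit `C/E` is
conilpotent. -/
def IsMaxCosemisimple (E : Submodule k C) : Prop :=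
  IsSubcoalgebra k C E ∧ ConilpotentQuotient k C E ∧
    ∀ E' : Submodule k C, IsSubcoalgebra k C E' → ConilpotentQuotient k C E' → E ≤ E'

end MaxCosemisimple

section CtrAux

variable {k : Type} [Field k]
variable {A B W W' : Type} [AddCommGroup A] [Module k A] [AddCommGroup B] [Module k B]
  [AddCommGroup W] [Module k W] [AddCommGroup W'] [Module k W']

/-- Contraction of a linear functional against the left tensor factor. -/
noncomputable def ctr (φ : A →ₗ[k] k) : A ⊗[k] W →ₗ[k] W :=
  (TensorProduct.lid k W).toLinearMap ∘ₗ φ.rTensor W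

@[simp] lemma ctr_tmul (φ : A →ₗ[k] k) (a : A) (w : W) :
    ctr φ (a ⊗ₜ[k] w) = φ a • w := by
  simp [ctr]

lemma ctr_zero_fun (x : A ⊗[k] W) : ctr (0 : A →ₗ[k] k) x = 0 := by
  simp [ctr]

lemma ctr_lTensor (φ : A →ₗ[k] k) (f : W →ₗ[k] W') (x : A ⊗[k] W) :
    ctr φ (f.lTensor A x) = f (ctr φ x) := by
  induction x using TensorProduct.induction_on with
  | zero => simp
  | tmul a w => simp
  | add x y hx hy => simp [hx, hy]

lemma ctr_rTensor (q : A →ₗ[k] B) (ψ : B →ₗ[k] k) (x : A ⊗[k] W) :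
    ctr ψ (q.rTensor W x) = ctr (ψ ∘ₗ q) x := by
  induction x using TensorProduct.induction_on with
  | zero => simp
  | tmul a w => simp
  | add x y hx hy => simp [hx, hy]

lemma coord_eq_ctr {ι : Type} [DecidableEq ι] (b : Module.Basis ι k A) (x : A ⊗[k] W) (i : ι) :
    TensorProduct.finsuppScalarLeft k W ι
      (TensorProduct.congr b.repr (LinearEquiv.refl k W) x) i = ctr (b.coord i) x := by
  induction x using TensorProduct.induction_on with
  | zero => simp
  | tmul a w =>
    simp [TensorProduct.congr_tmul, TensorProduct.finsuppScalarLeft_apply_tmul_apply,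
      Module.Basis.coord_apply]
  | add x y hx hy => simp [map_add, Finsupp.add_apply, hx, hy]

lemma eq_zero_of_ctr_eq_zero (x : A ⊗[k] W) (h : ∀ φ : A →ₗ[k] k, ctr φ x = 0) : x = 0 := by
  classical
  let b := Module.Basis.ofVectorSpace k A
  have h0 : TensorProduct.congr b.repr (LinearEquiv.refl k W) x = 0 := by
    apply (TensorProduct.finsuppScalarLeft k W _).injective
    rw [map_zero]
    ext i
    rw [coord_eq_ctr b x i]
    simp [h]
  have := congrArg (TensorProduct.congr b.repr (LinearEquiv.refl k W)).symm h0
  simpa using this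

lemma mem_range_lTensor_iff {P : Submodule k W} {x : A ⊗[k] W} :
    x ∈ LinearMap.range (P.subtype.lTensor A) ↔ ∀ φ : A →ₗ[k] k, ctr φ x ∈ P := by
  constructor
  · rintro ⟨z, rfl⟩ φ
    rw [ctr_lTensor]
    exact (ctr φ z).2
  · intro h
    classical
    let b := Module.Basis.ofVectorSpace k A
    set e : A ⊗[k] W ≃ₗ[k] _ :=
      (TensorProduct.congr b.repr (LinearEquiv.refl k W)).trans
        (TensorProduct.finsuppScalarLeft k W _) with he
    have hx : x = e.symm (e x) := (e.symm_apply_apply x).symm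
    rw [hx]
    have hsum : e x = (e x).sum fun i w => Finsupp.single i w := (Finsupp.sum_single _).symm
    rw [hsum, map_finsuppSum]
    apply Submodule.sum_mem
    intro i _
    have hsymm : e.symm (Finsupp.single i ((e x) i)) = b i ⊗ₜ[k] ((e x) i) := by
      rw [LinearEquiv.symm_apply_eq, he]
      simp only [LinearEquiv.trans_apply, TensorProduct.congr_tmul, LinearEquiv.refl_apply,
        Module.Basis.repr_self, TensorProduct.finsuppScalarLeft_apply_tmul]
      rw [Finsupp.sum_single_index (by simp)]
      rw [one_smul]
    show e.symm (Finsupp.single i ((e x) i)) ∈ _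
    rw [hsymm]
    have hPi : (e x) i ∈ P := by
      have hei : (e x) i = ctr (b.coord i) x := by
        simp only [he, LinearEquiv.trans_apply]
        exact coord_eq_ctr b x i
      rw [hei]
      exact h _
    exact ⟨b i ⊗ₜ[k] ⟨(e x) i, hPi⟩, rfl⟩

lemma mem_range_rTensor_of_ctr (S : Submodule k A) (u : A ⊗[k] W)
    (h : ∀ φ : A →ₗ[k] k, (∀ s ∈ S, φ s = 0) → ctr φ u = 0) :
    u ∈ LinearMap.range (S.subtype.rTensor W) := by
  rw [← rTensor_mkQ]
  rw [LinearMap.mem_ker]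
  apply eq_zero_of_ctr_eq_zero
  intro ψ
  rw [ctr_rTensor]
  apply h
  intro s hs
  simp [Submodule.mkQ_apply, (Submodule.Quotient.mk_eq_zero S).2 hs]

lemma range_rTensor_mono {S T : Submodule k A} (h : S ≤ T) :
    LinearMap.range (S.subtype.rTensor W) ≤ LinearMap.range (T.subtype.rTensor W) := by
  rintro x ⟨z, rfl⟩
  refine ⟨(Submodule.inclusion h).rTensor W z, ?_⟩
  rw [← LinearMap.comp_apply, ← LinearMap.rTensor_comp, Submodule.subtype_comp_inclusion]

end CtrAux
section CoalgAux

variable {k : Type} [Field k]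
variable {C : Type} [AddCommGroup C] [Module k C] [Coalgebra k C]
variable {V : Type} [AddCommGroup V] [Module k V]

/-- Contraction of the counit against the middle tensor factor. -/
noncomputable def contract2 (k C V : Type) [Field k] [AddCommGroup C] [Module k C]
    [Coalgebra k C] [AddCommGroup V] [Module k V] :
    C ⊗[k] (C ⊗[k] V) →ₗ[k] C ⊗[k] V :=
  (ctr (CoalgebraStruct.counit (R := k) (A := C)) : C ⊗[k] V →ₗ[k] V).lTensor C

lemma contract2_cofree (x : C ⊗[k] V) :
    contract2 k C V (cofreeCoaction k C V x) = x := by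
  have hkey : ∀ (t : C ⊗[k] C) (v : V), contract2 k C V ((TensorProduct.assoc k C C V) (t ⊗ₜ[k] v))
      = (TensorProduct.rid k C) ((CoalgebraStruct.counit (R := k) (A := C)).lTensor C t) ⊗ₜ[k] v := by
    intro t v
    induction t using TensorProduct.induction_on with
    | zero => simp
    | tmul a b =>
      simp only [contract2, TensorProduct.assoc_tmul, LinearMap.lTensor_tmul, ctr_tmul,
        TensorProduct.rid_tmul, TensorProduct.tmul_smul, TensorProduct.smul_tmul']
    | add t1 t2 h1 h2 => simp [add_tmul, h1, h2]
  have hmap : (contract2 k C V) ∘ₗ cofreeCoaction k C V = LinearMap.id := by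
    apply TensorProduct.ext'
    intro c v
    simp only [LinearMap.comp_apply, cofreeCoaction, LinearEquiv.coe_coe, LinearMap.id_apply]
    rw [LinearMap.rTensor_tmul, hkey, Coalgebra.lTensor_counit_comul]
    simp
  exact DFunLike.congr_fun hmap x

lemma contract2_range {S : Submodule k C} {x : C ⊗[k] (C ⊗[k] V)}
    (hx : x ∈ LinearMap.range (S.subtype.rTensor (C ⊗[k] V))) :
    contract2 k C V x ∈ LinearMap.range (S.subtype.rTensor V) := by
  obtain ⟨z, rfl⟩ := hx
  induction z using TensorProduct.induction_on with
  | zero => simp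
  | tmul s w =>
    exact ⟨s ⊗ₜ[k] (ctr (CoalgebraStruct.counit (R := k) (A := C)) w),
      by simp [contract2]⟩
  | add a b ha hb =>
    rw [map_add, map_add]
    exact Submodule.add_mem _ ha hb

lemma assoc_tensorSub_left {P Q : Submodule k C} {p : C ⊗[k] C}
    (hp : p ∈ tensorSub k C P Q) (v : V) :
    (TensorProduct.assoc k C C V) (p ⊗ₜ[k] v)
      ∈ LinearMap.range (P.subtype.rTensor (C ⊗[k] V)) := by
  obtain ⟨t, rfl⟩ := hp
  induction t using TensorProduct.induction_on with
  | zero => simp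
  | tmul s b => exact ⟨s ⊗ₜ[k] ((Q.subtype b) ⊗ₜ[k] v), by simp⟩
  | add t1 t2 h1 h2 =>
    rw [map_add, add_tmul, map_add]
    exact Submodule.add_mem _ h1 h2

lemma assoc_tensorSub_right {Q R : Submodule k C} {q : C ⊗[k] C}
    (hq : q ∈ tensorSub k C Q R) (v : V) :
    (TensorProduct.assoc k C C V) (q ⊗ₜ[k] v)
      ∈ LinearMap.range ((R.subtype.rTensor V).lTensor C) := by
  obtain ⟨t, rfl⟩ := hq
  induction t using TensorProduct.induction_on with
  | zero => simp
  | tmul c r => exact ⟨(Q.subtype c) ⊗ₜ[k] (r ⊗ₜ[k] v), by simp⟩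
  | add t1 t2 h1 h2 =>
    rw [map_add, add_tmul, map_add]
    exact Submodule.add_mem _ h1 h2

lemma delta_mem_left {A P Q : Submodule k C}
    (hA : ∀ a ∈ A, CoalgebraStruct.comul (R := k) (A := C) a ∈ tensorSub k C P Q)
    {x : C ⊗[k] V} (hx : x ∈ LinearMap.range (A.subtype.rTensor V)) :
    cofreeCoaction k C V x ∈ LinearMap.range (P.subtype.rTensor (C ⊗[k] V)) := by
  obtain ⟨y, rfl⟩ := hx
  induction y using TensorProduct.induction_on with
  | zero => simp
  | tmul a v =>
    have : cofreeCoaction k C V ((A.subtype.rTensor V) (a ⊗ₜ[k] v))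
        = (TensorProduct.assoc k C C V)
            ((CoalgebraStruct.comul (R := k) (A := C)) (A.subtype a) ⊗ₜ[k] v) := by
      simp [cofreeCoaction]
    rw [this]
    exact assoc_tensorSub_left (hA a a.2) v
  | add y1 y2 h1 h2 =>
    rw [map_add, map_add]
    exact Submodule.add_mem _ h1 h2

lemma delta_mem_sup {A P R : Submodule k C}
    (hA : ∀ a ∈ A, CoalgebraStruct.comul (R := k) (A := C) a
      ∈ tensorSub k C P ⊤ ⊔ tensorSub k C ⊤ R)
    {x : C ⊗[k] V} (hx : x ∈ LinearMap.range (A.subtype.rTensor V)) :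
    cofreeCoaction k C V x ∈
      LinearMap.range (P.subtype.rTensor (C ⊗[k] V)) ⊔
        LinearMap.range ((R.subtype.rTensor V).lTensor C) := by
  obtain ⟨y, rfl⟩ := hx
  induction y using TensorProduct.induction_on with
  | zero => simp
  | tmul a v =>
    obtain ⟨p, hp, q, hq, hpq⟩ := Submodule.mem_sup.1 (hA a a.2)
    have : cofreeCoaction k C V ((A.subtype.rTensor V) (a ⊗ₜ[k] v))
        = (TensorProduct.assoc k C C V) (p ⊗ₜ[k] v)
          + (TensorProduct.assoc k C C V) (q ⊗ₜ[k] v) := by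
      simp only [cofreeCoaction, LinearMap.comp_apply, LinearMap.rTensor_tmul,
        LinearEquiv.coe_coe, Submodule.coe_subtype]
      rw [← hpq, add_tmul, map_add]
    rw [this]
    exact Submodule.add_mem _
      (Submodule.mem_sup_left (assoc_tensorSub_left hp v))
      (Submodule.mem_sup_right (assoc_tensorSub_right hq v))
  | add y1 y2 h1 h2 =>
    rw [map_add, map_add]
    exact Submodule.add_mem _ h1 h2

lemma tensorSub_mono_right {T A B : Submodule k C} (h : A ≤ B) :
    tensorSub k C T A ≤ tensorSub k C T B := by
  rintro x ⟨t, rfl⟩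
  refine ⟨TensorProduct.map LinearMap.id (Submodule.inclusion h) t, ?_⟩
  rw [← LinearMap.comp_apply, ← TensorProduct.map_comp, LinearMap.comp_id,
    Submodule.subtype_comp_inclusion]

lemma conilChain_mono {E : Submodule k C} (hE : IsSubcoalgebra k C E) :
    Monotone (conilChain k C E) := by
  apply monotone_nat_of_le_succ
  intro n
  induction n with
  | zero =>
    intro x hx
    show x ∈ Submodule.comap _ _
    rw [Submodule.mem_comap]
    exact Submodule.mem_sup_left (tensorSub_mono_right le_top (hE x hx))
  | succ n ih =>
    show conilChain k C E (n + 1) ≤ conilChain k C E (n + 2)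
    exact Submodule.comap_mono (sup_le_sup_left (tensorSub_mono_right ih) _)

lemma exists_chain_level {E : Submodule k C} (hE : IsSubcoalgebra k C E)
    (hcon : ConilpotentQuotient k C E) (x : C ⊗[k] V) :
    ∃ n, x ∈ LinearMap.range ((conilChain k C E n).subtype.rTensor V) := by
  set D : ℕ → Submodule k (C ⊗[k] V) :=
    fun n => LinearMap.range ((conilChain k C E n).subtype.rTensor V) with hD
  have hDmono : Monotone D := fun m n h => range_rTensor_mono (conilChain_mono hE h)
  have hmem : x ∈ ⨆ n, D n := by
    induction x using TensorProduct.induction_on with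
    | zero => exact Submodule.zero_mem _
    | tmul c v =>
      obtain ⟨n, hn⟩ := hcon c
      exact Submodule.mem_iSup_of_mem n ⟨(⟨c, hn⟩ : conilChain k C E n) ⊗ₜ[k] v, rfl⟩
    | add a b ha hb => exact Submodule.add_mem _ ha hb
  exact (Submodule.mem_iSup_of_directed D hDmono.directed_le).1 hmem

lemma isSubcomod_map {M N : Type} [AddCommGroup M] [Module k M] [AddCommGroup N] [Module k N]
    {ρM : M →ₗ[k] C ⊗[k] M} {ρN : N →ₗ[k] C ⊗[k] N} {g : M →ₗ[k] N}
    (hg : IsComodHom k C ρM ρN g) {P : Submodule k M} (hP : IsSubcomod k C ρM P) :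
    IsSubcomod k C ρN (P.map g) := by
  rintro _ ⟨m, hm, rfl⟩
  have h1 : ρN (g m) = g.lTensor C (ρM m) := by
    rw [← LinearMap.comp_apply, ← hg, LinearMap.comp_apply]
  obtain ⟨z, hz⟩ := hP m hm
  refine ⟨(g.submoduleMap P).lTensor C z, ?_⟩
  have hcomp : (P.map g).subtype ∘ₗ g.submoduleMap P = g ∘ₗ P.subtype := by
    ext p
    rfl
  rw [h1, ← hz, ← LinearMap.comp_apply, ← LinearMap.lTensor_comp, hcomp,
    LinearMap.lTensor_comp, LinearMap.comp_apply]

lemma isSubcomod_iInf {M : Type} [AddCommGroup M] [Module k M] (ρ : M →ₗ[k] C ⊗[k] M)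
    (f : ℕ → Submodule k M) (hf : ∀ n, IsSubcomod k C ρ (f n)) :
    IsSubcomod k C ρ (⨅ n, f n) := by
  intro m hm
  rw [mem_range_lTensor_iff]
  intro φ
  refine (Submodule.mem_iInf _).2 fun n => ?_
  exact mem_range_lTensor_iff.1 (hf n m ((Submodule.mem_iInf _).1 hm n)) φ

lemma exists_mem_socle {Css : Submodule k C} (hE : IsSubcoalgebra k C Css)
    (hcon : ConilpotentQuotient k C Css)
    (Q : Submodule k (C ⊗[k] V)) (hQ : IsSubcomod k C (cofreeCoaction k C V) Q)
    (hQ0 : Q ≠ ⊥) :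
    ∃ x, x ∈ Q ∧ x ≠ 0 ∧ cofreeCoaction k C V x
      ∈ LinearMap.range (Css.subtype.rTensor (C ⊗[k] V)) := by
  classical
  obtain ⟨x0, hx0Q, hx00⟩ : ∃ x, x ∈ Q ∧ x ≠ 0 := by
    by_contra hcontra
    push_neg at hcontra
    exact hQ0 (eq_bot_iff.2 fun x hx => by
      by_contra hx0
      exact hx0 (hcontra x hx))
  have hex : ∃ n, ∃ x, x ∈ Q ∧ x ≠ 0 ∧
      x ∈ LinearMap.range ((conilChain k C Css n).subtype.rTensor V) := by
    obtain ⟨n, hn⟩ := exists_chain_level hE hcon x0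
    exact ⟨n, x0, hx0Q, hx00, hn⟩
  obtain ⟨x, hxQ, hx0, hxD⟩ := Nat.find_spec hex
  refine ⟨x, hxQ, hx0, ?_⟩
  cases hn : Nat.find hex with
  | zero =>
    rw [hn] at hxD
    exact delta_mem_left (fun a ha => hE a ha) hxD
  | succ m =>
    rw [hn] at hxD
    apply mem_range_rTensor_of_ctr
    intro φ hφ
    -- the candidate element
    have hyQ : ctr φ (cofreeCoaction k C V x) ∈ Q := by
      obtain ⟨z, hz⟩ := hQ x hxQ
      rw [← hz, ctr_lTensor]
      exact (ctr φ z).2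
    have hsup := delta_mem_sup (A := conilChain k C Css (m + 1)) (P := Css)
      (R := conilChain k C Css m) (fun a ha => Submodule.mem_comap.1 ha) hxD
    obtain ⟨p, hp, q, hq, hpq⟩ := Submodule.mem_sup.1 hsup
    have hctrp : ctr φ p = 0 := by
      obtain ⟨z, rfl⟩ := hp
      rw [ctr_rTensor]
      have : (φ ∘ₗ Css.subtype) = 0 := by
        ext s
        exact hφ s s.2
      rw [this, ctr_zero_fun]
    have hctrq : ctr φ q ∈ LinearMap.range ((conilChain k C Css m).subtype.rTensor V) := by
      obtain ⟨z, rfl⟩ := hq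
      rw [ctr_lTensor]
      exact ⟨ctr φ z, rfl⟩
    have hy : ctr φ (cofreeCoaction k C V x)
        ∈ LinearMap.range ((conilChain k C Css m).subtype.rTensor V) := by
      rw [← hpq, map_add, hctrp, zero_add]
      exact hctrq
    by_contra hy0
    have : ∃ y, y ∈ Q ∧ y ≠ 0 ∧
        y ∈ LinearMap.range ((conilChain k C Css m).subtype.rTensor V) :=
      ⟨ctr φ (cofreeCoaction k C V x), hyQ, hy0, hy⟩
    exact Nat.find_min hex (by omega) this

end CoalgAux
/-- Lemma 1.4(b): if the maximal cosemisimple subcoalgebra `C^ss ⊆ C` is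
finite-dimensional, then any co-Noetherian left `C`-comodule is Artinian. -/
theorem coNoetherian_comodule_artinian
    (k : Type) [Field k]
    (C : Type) [AddCommGroup C] [Module k C] [Coalgebra k C]
    (Css : Submodule k C) (hss : IsMaxCosemisimple k C Css)
    (hfin : FiniteDimensional k ↥Css)
    (M : Type) [AddCommGroup M] [Module k M]
    (ρ : M →ₗ[k] C ⊗[k] M) (hM : IsComod k C ρ)
    (hco : CoNoetherianComod k C ρ) :
    ArtinianComod k C ρ := by
  intro f hsub hdesc
  obtain ⟨hcoalg, hconil, -⟩ := hss
  have hf_anti : Antitone f := antitone_nat_of_succ_le hdesc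
  set Ninf : Submodule k M := ⨅ i, f i with hNinf
  obtain ⟨V, _, _, hVfin, g, hg, hker⟩ := hco Ninf (isSubcomod_iInf ρ f hsub)
  haveI := hVfin
  set δ : C ⊗[k] V →ₗ[k] C ⊗[k] (C ⊗[k] V) := cofreeCoaction k C V with hδ
  set Soc : Submodule k (C ⊗[k] V) :=
    Submodule.comap δ (LinearMap.range (Css.subtype.rTensor (C ⊗[k] V))) with hSoc
  have hSocle : Soc ≤ LinearMap.range (Css.subtype.rTensor V) := by
    intro x hx
    have h1 := contract2_range (Submodule.mem_comap.1 hx)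
    rwa [hδ, contract2_cofree] at h1
  haveI : FiniteDimensional k (LinearMap.range (Css.subtype.rTensor V)) :=
    LinearMap.finiteDimensional_range _
  haveI hSocFin : FiniteDimensional k Soc := Submodule.finiteDimensional_of_le hSocle
  set S : ℕ → Submodule k (C ⊗[k] V) := fun i => (f i).map g ⊓ Soc with hS
  have hS_le_Soc : ∀ i, S i ≤ Soc := fun i => inf_le_right
  haveI hSfin : ∀ i, FiniteDimensional k (S i) := fun i =>
    Submodule.finiteDimensional_of_le (hS_le_Soc i)
  have hS_anti : Antitone S := fun i j h =>
    inf_le_inf (Submodule.map_mono (hf_anti h)) le_rfl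
  set a : ℕ → ℕ := fun i => Module.finrank k (S i) with ha
  have ha_anti : ∀ i j, i ≤ j → a j ≤ a i := fun i j h =>
    Submodule.finrank_mono (hS_anti h)
  obtain ⟨n0, hstab⟩ : ∃ n0, ∀ m, n0 ≤ m → a m = a n0 := by
    have hne : (Set.range a).Nonempty := ⟨a 0, 0, rfl⟩
    obtain ⟨n0, hn0⟩ := Nat.sInf_mem hne
    refine ⟨n0, fun m hm => le_antisymm (ha_anti _ _ hm) ?_⟩
    rw [hn0]
    exact Nat.sInf_le ⟨m, rfl⟩
  have hSeq : ∀ m, n0 ≤ m → S m = S n0 := fun m hm =>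
    Submodule.eq_of_le_of_finrank_eq (hS_anti hm) (hstab m hm)
  -- the stable socle is zero
  have hSbot : S n0 = ⊥ := by
    rw [eq_bot_iff]
    intro x hx
    have hx1 : x ∈ (f n0).map g := hx.1
    have hall : ∀ i, x ∈ (f i).map g := by
      intro i
      rcases le_total i n0 with h | h
      · exact Submodule.map_mono (hf_anti h) hx1
      · exact ((hSeq i h).symm ▸ ⟨hx1, hx.2⟩ : x ∈ S i).1
    obtain ⟨m0, hm0, rfl⟩ := hx1
    have hm0all : ∀ i, m0 ∈ f i := by
      intro i
      obtain ⟨mi, hmi, hgmi⟩ := hall i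
      have hd : m0 - mi ∈ Ninf := by
        rw [← hker, LinearMap.mem_ker, map_sub, hgmi, sub_self]
      have h2 : m0 - mi ∈ f i := iInf_le f i hd
      have := (f i).add_mem h2 hmi
      simpa using this
    have hmem : m0 ∈ Ninf := (Submodule.mem_iInf _).2 hm0all
    have : g m0 = 0 := by
      rw [← LinearMap.mem_ker, hker]
      exact hmem
    simp [this]
  have key : ∀ m, n0 ≤ m → f m = Ninf := by
    intro m hm
    have hmap : (f m).map g = ⊥ := by
      by_contra hne
      obtain ⟨x, hxQ, hx0, hxδ⟩ := exists_mem_socle hcoalg hconil ((f m).map g)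
        (isSubcomod_map hg (hsub m)) hne
      have hxS : x ∈ S m := ⟨hxQ, Submodule.mem_comap.2 hxδ⟩
      rw [hSeq m hm, hSbot] at hxS
      exact hx0 (by simpa using hxS)
    apply le_antisymm
    · intro y hy
      have hgy : g y ∈ (f m).map g := Submodule.mem_map_of_mem hy
      rw [hmap] at hgy
      have h0 : y ∈ LinearMap.ker g := LinearMap.mem_ker.mpr (by simpa using hgy)
      rwa [hker] at h0
    · exact iInf_le f m
  exact ⟨n0, fun m hm => by rw [key m hm, key n0 le_rfl]⟩
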